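/- arXiv:1003.2297 — 7 statements merged into one kernel-verified Lean document; each statement's English description precedes it below -/
import Mathlib

section
/- For a finite group G and a subgroup H with G = H·Z(G), the relative commutativity degree satisfies d(H,G) = d(G), where d(G) is the commutativity degree of G. -/
section Aux

variable {G : Type*} [Group G]

/-- The fiber of the multiplication map `H × Z(G) → G` over a point of `H * Z(G)`
is equivalent to `H ⊓ Z(G)`. -/
noncomputable def fibEquivAux (H : Subgroup G) (a h₀ z₀ : G) (hh₀ : h₀ ∈ H)
    (hz₀ : z₀ ∈ Subgroup.center G) (hA : a = h₀ * z₀) :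
    {p : H × Subgroup.center G // (p.1 : G) * p.2 = a} ≃
      (H ⊓ Subgroup.center G : Subgroup G) where
  toFun p := ⟨h₀⁻¹ * p.1.1, by
    have key : h₀⁻¹ * (p.1.1 : G) = z₀ * (p.1.2 : G)⁻¹ := by
      have hp : (p.1.1 : G) * p.1.2 = h₀ * z₀ := by rw [p.2, hA]
      apply mul_right_cancel (b := (p.1.2 : G))
      simp [mul_assoc, hp]
    exact Subgroup.mem_inf.mpr ⟨mul_mem (inv_mem hh₀) p.1.1.2,
      by rw [key]; exact mul_mem hz₀ (inv_mem p.1.2.2)⟩⟩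
  invFun k := ⟨(⟨h₀ * k, mul_mem hh₀ (Subgroup.mem_inf.mp k.2).1⟩,
      ⟨(k : G)⁻¹ * z₀, mul_mem (inv_mem (Subgroup.mem_inf.mp k.2).2) hz₀⟩), by
    simp [hA, mul_assoc]⟩
  left_inv p := by
    have hp : (p.1.1 : G) * p.1.2 = h₀ * z₀ := by rw [p.2, hA]
    apply Subtype.ext
    apply Prod.ext <;> apply Subtype.ext <;> simp [mul_inv_rev, mul_assoc]
    apply mul_left_cancel (a := (p.1.1 : G))
    simp [← mul_assoc, hp]
  right_inv k := by
    apply Subtype.ext; simp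

end Aux

theorem relative_commutativity_degree_eq_of_center_product
    {G : Type*} [Group G] [Finite G] (H : Subgroup G)
    (hHZ : ∀ g : G, ∃ h ∈ H, ∃ z ∈ Subgroup.center G, g = h * z) :
    (Nat.card {p : H × G // Commute (p.1 : G) p.2} : ℚ) /
        (Nat.card H * Nat.card G) =
      (Nat.card {p : G × G // Commute p.1 p.2} : ℚ) / (Nat.card G) ^ 2 := by
  classical
  set Z := Subgroup.center G with hZ
  set K : Subgroup G := H ⊓ Z with hK
  have fibEquiv : ∀ a : G, Nonempty ({p : H × Z // (p.1 : G) * p.2 = a} ≃ K) := by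
    intro a
    obtain ⟨h₀, hh₀, z₀, hz₀, hA⟩ := hHZ a
    exact ⟨fibEquivAux H a h₀ z₀ hh₀ hz₀ hA⟩
  -- Step 1 : |H| * |Z| = |G| * |K|
  have step1 : Nat.card H * Nat.card Z = Nat.card G * Nat.card K := by
    have e : (H × Z) ≃ (G × K) :=
      (Equiv.sigmaFiberEquiv (fun p : H × Z => (p.1 : G) * p.2)).symm.trans
        ((Equiv.sigmaCongrRight (fun a => (fibEquiv a).some)).trans
          (Equiv.sigmaEquivProd G K))
    have := Nat.card_congr e
    simpa [Nat.card_prod] using this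
  -- the triple set
  let T := {q : (H × Z) × G // Commute ((q.1.1 : G) * q.1.2) q.2}
  -- T ≃ S1 × Z
  have eT1 : T ≃ {p : H × G // Commute (p.1 : G) p.2} × Z := by
    refine ⟨fun q => (⟨(q.1.1.1, q.1.2), ?_⟩, q.1.1.2), fun p => ⟨((p.1.1.1, p.2), p.1.1.2), ?_⟩,
      fun q => rfl, fun p => rfl⟩
    · have hzc : Commute (q.1.1.2 : G) q.1.2 :=
        (Subgroup.mem_center_iff.mp q.1.1.2.2 q.1.2).symm
      have h2 := q.2.mul_left hzc.inv_left
      simpa using h2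
    · have hzc : Commute (p.2 : G) p.1.1.2 :=
        (Subgroup.mem_center_iff.mp p.2.2 p.1.1.2).symm
      exact p.1.2.mul_left hzc
  let S2 := {p : G × G // Commute p.1 p.2}
  have eT2 : T ≃ (s : S2) × {p : H × Z // (p.1 : G) * p.2 = s.1.1} := by
    refine ⟨fun q => ⟨⟨((q.1.1.1 : G) * q.1.1.2, q.1.2), q.2⟩, ⟨q.1.1, rfl⟩⟩,
      fun s => ⟨((s.2.1.1, s.2.1.2), s.1.1.2), ?_⟩, fun q => rfl, ?_⟩
    · show Commute ((s.2.1.1 : G) * s.2.1.2) s.1.1.2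
      rw [s.2.2]; exact s.1.2
    · rintro ⟨⟨⟨a, g⟩, hc⟩, ⟨⟨h, z⟩, hp⟩⟩
      dsimp only at hp
      subst hp
      rfl
  have eT2' : T ≃ S2 × K :=
    eT2.trans ((Equiv.sigmaCongrRight (fun s => (fibEquiv s.1.1).some)).trans
      (Equiv.sigmaEquivProd S2 K))
  have step2 : Nat.card {p : H × G // Commute (p.1 : G) p.2} * Nat.card Z
      = Nat.card S2 * Nat.card K := by
    have h1 := Nat.card_congr eT1
    have h2 := Nat.card_congr eT2'
    rw [Nat.card_prod] at h1 h2
    rw [← h1, h2]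
  have kpos : 0 < Nat.card K := Nat.card_pos
  have key : Nat.card {p : H × G // Commute (p.1 : G) p.2} * Nat.card G
      = Nat.card S2 * Nat.card H := by
    apply Nat.eq_of_mul_eq_mul_right kpos
    calc Nat.card {p : H × G // Commute (p.1 : G) p.2} * Nat.card G * Nat.card K
        = Nat.card {p : H × G // Commute (p.1 : G) p.2} * (Nat.card G * Nat.card K) := by ring
      _ = Nat.card {p : H × G // Commute (p.1 : G) p.2} * (Nat.card H * Nat.card Z) := by
          rw [← step1]
      _ = (Nat.card {p : H × G // Commute (p.1 : G) p.2} * Nat.card Z) * Nat.card H := by ring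
      _ = (Nat.card S2 * Nat.card K) * Nat.card H := by rw [step2]
      _ = Nat.card S2 * Nat.card H * Nat.card K := by ring
  have key' : (Nat.card {p : H × G // Commute (p.1 : G) p.2} : ℚ) * Nat.card G
      = Nat.card {p : G × G // Commute p.1 p.2} * Nat.card H := by
    exact_mod_cast congrArg (Nat.cast (R := ℚ)) key
  have hgpos : 0 < Nat.card G := Nat.card_pos
  have hhpos : 0 < Nat.card H := Nat.card_pos
  have hg0 : (Nat.card G : ℚ) ≠ 0 := Nat.cast_ne_zero.mpr hgpos.ne'
  have hh0 : (Nat.card H : ℚ) ≠ 0 := Nat.cast_ne_zero.mpr hhpos.ne'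
  rw [div_eq_div_iff (by positivity) (by positivity)]
  linear_combination (Nat.card G : ℚ) * key'
end

section
/- For a finite group G and a subgroup H with G = H·Z(G), the commutativity degree of H equals the commutativity degree of G: d(H) = d(G). -/
lemma commute_mul_center_iff {G : Type*} [Group G] {z1 z2 : G}
    (hz1 : z1 ∈ Subgroup.center G) (hz2 : z2 ∈ Subgroup.center G) (h1 h2 : G) :
    Commute (h1 * z1) (h2 * z2) ↔ Commute h1 h2 := by
  have c1 : ∀ g : G, g * z1 = z1 * g := fun g => Subgroup.mem_center_iff.mp hz1 g
  have c2 : ∀ g : G, g * z2 = z2 * g := fun g => Subgroup.mem_center_iff.mp hz2 g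
  have A : ∀ a b : G, (a * z1) * (b * z2) = (a * b) * (z1 * z2) := by
    intro a b
    rw [mul_assoc a, ← mul_assoc z1, ← c1 b, mul_assoc b, ← mul_assoc a]
  have B : ∀ a b : G, (a * z2) * (b * z1) = (a * b) * (z1 * z2) := by
    intro a b
    rw [mul_assoc a, ← mul_assoc z2, ← c2 b, mul_assoc b, ← mul_assoc a, c1 z2]
  unfold Commute SemiconjBy
  rw [A, B]
  exact mul_left_inj _

theorem commutativity_degree_subgroup_eq_of_center_product
    {G : Type*} [Group G] [Finite G] (H : Subgroup G)
    (hHZ : ∀ g : G, ∃ h ∈ H, ∃ z ∈ Subgroup.center G, g = h * z) :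
    (Nat.card {p : H × H // Commute (p.1 : G) (p.2 : G)} : ℚ) /
        (Nat.card H) ^ 2 =
      (Nat.card {p : G × G // Commute p.1 p.2} : ℚ) / (Nat.card G) ^ 2 := by
  set Z := Subgroup.center G with hZ
  let φ : (H × Z) →* G := MonoidHom.noncommCoprod H.subtype Z.subtype
    (fun h z => (Subgroup.mem_center_iff.mp z.2 h))
  have hφ : ∀ p : H × Z, φ p = (p.1 : G) * (p.2 : G) := fun _ => rfl
  have hsurj : Function.Surjective φ := by
    intro g
    obtain ⟨h, hh, z, hz, rfl⟩ := hHZ g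
    exact ⟨(⟨h, hh⟩, ⟨z, hz⟩), rfl⟩
  set s : G → H × Z := Function.surjInv hsurj with hsdef
  have hs : ∀ g : G, φ (s g) = g := fun g => Function.surjInv_eq hsurj g
  have kerel : ∀ a : H × Z, (s (φ a))⁻¹ * a ∈ φ.ker := by
    intro a
    simp [MonoidHom.mem_ker, map_mul, map_inv, hs]
  -- E1 : commuting-pairs-via-φ ≃ commuting pairs of G × ker × ker
  let E1 : {p : (H × Z) × (H × Z) // Commute (φ p.1) (φ p.2)} ≃
      {p : G × G // Commute p.1 p.2} × (φ.ker × φ.ker) :=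
    { toFun := fun x => (⟨(φ x.1.1, φ x.1.2), x.2⟩,
        (⟨(s (φ x.1.1))⁻¹ * x.1.1, kerel _⟩, ⟨(s (φ x.1.2))⁻¹ * x.1.2, kerel _⟩))
      invFun := fun y => ⟨(s y.1.1.1 * y.2.1, s y.1.1.2 * y.2.2), by
        have k1 : φ (y.2.1 : H × Z) = 1 := MonoidHom.mem_ker.mp y.2.1.2
        have k2 : φ (y.2.2 : H × Z) = 1 := MonoidHom.mem_ker.mp y.2.2.2
        simp only [map_mul, hs, k1, k2, mul_one]
        exact y.1.2⟩
      left_inv := by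
        rintro ⟨⟨a, b⟩, hc⟩
        simp [mul_inv_cancel_left]
      right_inv := by
        rintro ⟨⟨⟨g1, g2⟩, hc⟩, ⟨k1, k2⟩⟩
        have e1 : φ (s g1 * (k1 : H × Z)) = g1 := by
          simp [map_mul, hs, MonoidHom.mem_ker.mp k1.2]
        have e2 : φ (s g2 * (k2 : H × Z)) = g2 := by
          simp [map_mul, hs, MonoidHom.mem_ker.mp k2.2]
        simp [e1, e2, inv_mul_cancel_left] }
  -- E2 : commuting-pairs-via-φ ≃ commuting pairs of H × Z × Z
  let E2 : {p : (H × Z) × (H × Z) // Commute (φ p.1) (φ p.2)} ≃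
      {p : H × H // Commute (p.1 : G) (p.2 : G)} × (Z × Z) :=
    { toFun := fun x => (⟨(x.1.1.1, x.1.2.1), by
        have := x.2
        rw [hφ, hφ, commute_mul_center_iff x.1.1.2.2 x.1.2.2.2] at this
        exact this⟩, (x.1.1.2, x.1.2.2))
      invFun := fun y => ⟨((y.1.1.1, y.2.1), (y.1.1.2, y.2.2)), by
        rw [hφ, hφ]
        exact (commute_mul_center_iff y.2.1.2 y.2.2.2 _ _).mpr y.1.2⟩
      left_inv := by rintro ⟨⟨⟨h1, z1⟩, ⟨h2, z2⟩⟩, hc⟩; rfl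
      right_inv := by rintro ⟨⟨⟨h1, h2⟩, hc⟩, ⟨z1, z2⟩⟩; rfl }
  -- E3 : H × Z ≃ G × ker
  let E3 : (H × Z) ≃ G × φ.ker :=
    { toFun := fun a => (φ a, ⟨(s (φ a))⁻¹ * a, kerel a⟩)
      invFun := fun y => s y.1 * y.2
      left_inv := by intro a; simp [mul_inv_cancel_left]
      right_inv := by
        rintro ⟨g, k⟩
        have e1 : φ (s g * (k : H × Z)) = g := by
          simp [map_mul, hs, MonoidHom.mem_ker.mp k.2]
        simp [e1, inv_mul_cancel_left] }
  have c1eq : Nat.card {p : (H × Z) × (H × Z) // Commute (φ p.1) (φ p.2)} =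
      Nat.card {p : G × G // Commute p.1 p.2} * (Nat.card φ.ker * Nat.card φ.ker) := by
    rw [Nat.card_congr E1, Nat.card_prod, Nat.card_prod]
  have c2eq : Nat.card {p : (H × Z) × (H × Z) // Commute (φ p.1) (φ p.2)} =
      Nat.card {p : H × H // Commute (p.1 : G) (p.2 : G)} * (Nat.card Z * Nat.card Z) := by
    rw [Nat.card_congr E2, Nat.card_prod, Nat.card_prod]
  have c3eq : Nat.card H * Nat.card Z = Nat.card G * Nat.card φ.ker := by
    rw [← Nat.card_prod, Nat.card_congr E3, Nat.card_prod]
  -- now the rational arithmetic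
  have hcomm : (Nat.card {p : H × H // Commute (p.1 : G) (p.2 : G)} : ℚ) *
      ((Nat.card Z : ℚ) * Nat.card Z) =
      (Nat.card {p : G × G // Commute p.1 p.2} : ℚ) *
      ((Nat.card φ.ker : ℚ) * Nat.card φ.ker) := by
    exact_mod_cast (c2eq.symm.trans c1eq)
  have hcard : (Nat.card H : ℚ) * Nat.card Z = (Nat.card G : ℚ) * Nat.card φ.ker := by
    exact_mod_cast c3eq
  have hH : (0:ℚ) < Nat.card H := by exact_mod_cast Nat.card_pos
  have hG : (0:ℚ) < Nat.card G := by exact_mod_cast Nat.card_pos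
  have hZc : (0:ℚ) < Nat.card Z := by exact_mod_cast Nat.card_pos
  have hK : (0:ℚ) < Nat.card φ.ker := by exact_mod_cast Nat.card_pos
  rw [div_eq_div_iff (by positivity) (by positivity)]
  set a : ℚ := (Nat.card {p : H × H // Commute (p.1 : G) (p.2 : G)} : ℚ)
  set b : ℚ := (Nat.card {p : G × G // Commute p.1 p.2} : ℚ)
  set h : ℚ := (Nat.card H : ℚ)
  set g : ℚ := (Nat.card G : ℚ)
  set z : ℚ := (Nat.card Z : ℚ)
  set k : ℚ := (Nat.card φ.ker : ℚ)
  have key : a * g ^ 2 * (z * z) = b * h ^ 2 * (z * z) := by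
    calc a * g ^ 2 * (z * z) = (a * (z * z)) * g ^ 2 := by ring
      _ = (b * (k * k)) * g ^ 2 := by rw [hcomm]
      _ = b * ((g * k) * (g * k)) := by ring
      _ = b * ((h * z) * (h * z)) := by rw [← hcard]
      _ = b * h ^ 2 * (z * z) := by ring
  exact mul_right_cancel₀ (by positivity) key
end

section
/- Let G be a group and H a subgroup with G = H·Z_n(G). Then H/Z_n(H) is isomorphic to G/Z_n(G). -/
namespace QuotUCSAux

open scoped commutatorElement

variable {G : Type*} [Group G]

/-- `allComm n x` : every `n`-fold iterated commutator starting at `x` vanishes. -/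
def allComm : ℕ → G → Prop
  | 0, x => x = 1
  | n + 1, x => ∀ g : G, allComm n ⁅x, g⁆

lemma allComm_mem : ∀ (n : ℕ) (x : G), allComm n x → x ∈ Subgroup.upperCentralSeries G n
  | 0, x, h => by
      rw [Subgroup.upperCentralSeries_zero, Subgroup.mem_bot]; exact h
  | n + 1, x, h => by
      rw [Subgroup.mem_upperCentralSeries_succ_iff]
      intro y
      exact allComm_mem n ⁅x, y⁆ (h y)

lemma comm_mem_sub_one (j : ℕ) (g z : G) (hz : z ∈ Subgroup.upperCentralSeries G j) :
    ⁅g, z⁆ ∈ Subgroup.upperCentralSeries G (j - 1) := by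
  cases j with
  | zero =>
      rw [Subgroup.upperCentralSeries_zero, Subgroup.mem_bot] at hz
      subst hz
      simp
  | succ j =>
      have h1 : ⁅z, g⁆ ∈ Subgroup.upperCentralSeries G j :=
        Subgroup.mem_upperCentralSeries_succ_iff.mp hz g
      have h2 := (Subgroup.upperCentralSeries G j).inv_mem h1
      rw [commutatorElement_inv] at h2
      simpa using h2

lemma step_P {k : ℕ} {w : G}
    (hw : ∀ j, ∀ z ∈ Subgroup.upperCentralSeries G j, ⁅w, z⁆ ∈ Subgroup.upperCentralSeries G (j - 1 - k))
    (h : G) :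
    ∀ j, ∀ z ∈ Subgroup.upperCentralSeries G j,
      ⁅⁅w, h⁆, z⁆ ∈ Subgroup.upperCentralSeries G (j - 1 - (k + 1)) := by
  have hw' : ∀ j, ∀ z ∈ Subgroup.upperCentralSeries G j,
      ⁅w⁻¹, z⁆ ∈ Subgroup.upperCentralSeries G (j - 1 - k) := by
    intro j z hz
    have e : ⁅w⁻¹, z⁆ = w⁻¹ * ⁅w, z⁆⁻¹ * w := by group
    rw [e]
    exact (inferInstance : (Subgroup.upperCentralSeries G (j - 1 - k)).Normal).conj_mem' _ (inv_mem (hw j z hz)) w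
  intro j z hz
  have hN : (Subgroup.upperCentralSeries G (j - 1 - (k + 1))).Normal := inferInstance
  -- A := ⁅h, ⁅z⁻¹, w⁻¹⁆⁆ ∈ N
  have hinner1 : ⁅z⁻¹, w⁻¹⁆ ∈ Subgroup.upperCentralSeries G (j - 1 - k) := by
    have h1 := hw' j z⁻¹ (inv_mem hz)
    have h2 := (Subgroup.upperCentralSeries G (j - 1 - k)).inv_mem h1
    rwa [commutatorElement_inv] at h2
  have hA : ⁅h, ⁅z⁻¹, w⁻¹⁆⁆ ∈ Subgroup.upperCentralSeries G (j - 1 - (k + 1)) := by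
    have h1 := comm_mem_sub_one (j - 1 - k) h _ hinner1
    have e : j - 1 - k - 1 = j - 1 - (k + 1) := by omega
    rwa [e] at h1
  -- B := ⁅w⁻¹, ⁅h⁻¹, z⁆⁆ ∈ N
  have hinner2 : ⁅h⁻¹, z⁆ ∈ Subgroup.upperCentralSeries G (j - 1) := comm_mem_sub_one j h⁻¹ z hz
  have hB : ⁅w⁻¹, ⁅h⁻¹, z⁆⁆ ∈ Subgroup.upperCentralSeries G (j - 1 - (k + 1)) := by
    have h1 := hw' (j - 1) _ hinner2
    have e : j - 1 - 1 - k = j - 1 - (k + 1) := by omega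
    rwa [e] at h1
  have key : ⁅⁅w, h⁆, z⁆ =
      (((w * z) * ⁅h, ⁅z⁻¹, w⁻¹⁆⁆⁻¹ * (w * z)⁻¹) *
        ((w * h) * ⁅w⁻¹, ⁅h⁻¹, z⁆⁆⁻¹ * (w * h)⁻¹))⁻¹ := by
    simp only [commutatorElement_def]
    group
  rw [key]
  exact inv_mem (mul_mem (hN.conj_mem _ (inv_mem hA) _) (hN.conj_mem _ (inv_mem hB) _))

lemma rev_incl (H : Subgroup G) :
    ∀ (n : ℕ) (x : H), (x : G) ∈ Subgroup.upperCentralSeries G n → x ∈ Subgroup.upperCentralSeries H n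
  | 0, x, hx => by
      rw [Subgroup.upperCentralSeries_zero, Subgroup.mem_bot] at hx ⊢
      exact Subtype.ext hx
  | n + 1, x, hx => by
      rw [Subgroup.mem_upperCentralSeries_succ_iff]
      intro y
      refine rev_incl H n _ ?_
      have := Subgroup.mem_upperCentralSeries_succ_iff.mp hx (y : G)
      push_cast
      exact this

lemma main_ind (H : Subgroup G) (n : ℕ)
    (hHZ : ∀ g : G, ∃ h ∈ H, ∃ z ∈ Subgroup.upperCentralSeries G n, g = h * z) :
    ∀ (m k : ℕ), m + k = n → ∀ (u v : G),
      u ∈ (Subgroup.upperCentralSeries H m).map H.subtype →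
      (∀ j, ∀ z ∈ Subgroup.upperCentralSeries G j, ⁅u, z⁆ ∈ Subgroup.upperCentralSeries G (j - 1 - k)) →
      v ∈ Subgroup.upperCentralSeries G m → allComm m (u * v) := by
  intro m
  induction m with
  | zero =>
      intro k hk u v hu hv hvm
      rw [Subgroup.upperCentralSeries_zero, Subgroup.map_bot, Subgroup.mem_bot] at hu
      rw [Subgroup.upperCentralSeries_zero, Subgroup.mem_bot] at hvm
      show u * v = 1
      rw [hu, hvm, mul_one]
  | succ m ih =>
      intro k hk u v hu hP hv
      intro g
      obtain ⟨h, hh, z, hz, rfl⟩ := hHZ g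
      obtain ⟨u₀, hu₀, rfl⟩ := hu
      set h₀ : H := ⟨h, hh⟩ with hh₀
      have hcomm : (⁅u₀, h₀⁆ : H) ∈ Subgroup.upperCentralSeries H m :=
        Subgroup.mem_upperCentralSeries_succ_iff.mp hu₀ h₀
      have hcoe : ((⁅u₀, h₀⁆ : H) : G) = ⁅(H.subtype u₀ : G), h⁆ :=
        map_commutatorElement H.subtype u₀ h₀
      set u' : G := ⁅(H.subtype u₀ : G), h⁆ with hu'def
      have hu' : u' ∈ (Subgroup.upperCentralSeries H m).map H.subtype :=
        ⟨⁅u₀, h₀⁆, hcomm, hcoe⟩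
      have hP' : ∀ j, ∀ z' ∈ Subgroup.upperCentralSeries G j,
          ⁅u', z'⁆ ∈ Subgroup.upperCentralSeries G (j - 1 - (k + 1)) := step_P hP h
      -- pieces of v'
      have hNm : (Subgroup.upperCentralSeries G m).Normal := inferInstance
      have hvg : ⁅v, h * z⁆ ∈ Subgroup.upperCentralSeries G m :=
        Subgroup.mem_upperCentralSeries_succ_iff.mp hv (h * z)
      have huz : ⁅(H.subtype u₀ : G), z⁆ ∈ Subgroup.upperCentralSeries G m := by
        have h1 := hP n z hz
        have e : n - 1 - k = m := by omega
        rwa [e] at h1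
      set v' : G := u'⁻¹ * ((H.subtype u₀ : G) * ⁅v, h * z⁆ * (H.subtype u₀ : G)⁻¹) * u' *
        (h * ⁅(H.subtype u₀ : G), z⁆ * h⁻¹) with hv'def
      have hv' : v' ∈ Subgroup.upperCentralSeries G m := by
        refine mul_mem (hNm.conj_mem' _ (hNm.conj_mem _ hvg _) u') (hNm.conj_mem _ huz h)
      have key : ⁅(H.subtype u₀ : G) * v, h * z⁆ = u' * v' := by
        rw [hv'def, hu'def]
        simp only [commutatorElement_def]
        group
      rw [key]
      exact ih (k + 1) (by omega) u' v' hu' hP' hv'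

lemma fwd_incl (H : Subgroup G) (n : ℕ)
    (hHZ : ∀ g : G, ∃ h ∈ H, ∃ z ∈ Subgroup.upperCentralSeries G n, g = h * z)
    (x : H) (hx : x ∈ Subgroup.upperCentralSeries H n) : (x : G) ∈ Subgroup.upperCentralSeries G n := by
  have hP0 : ∀ j, ∀ z ∈ Subgroup.upperCentralSeries G j,
      ⁅(x : G), z⁆ ∈ Subgroup.upperCentralSeries G (j - 1 - 0) := by
    intro j z hz
    simpa using comm_mem_sub_one j (x : G) z hz
  have h1 := main_ind H n hHZ n 0 (by omega) (x : G) 1 ⟨x, hx, rfl⟩ hP0 (one_mem _)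
  rw [mul_one] at h1
  exact allComm_mem n _ h1

end QuotUCSAux

theorem quotient_upperCentral_iso_of_product
    {G : Type*} [Group G] (H : Subgroup G) (n : ℕ)
    (hHZ : ∀ g : G, ∃ h ∈ H, ∃ z ∈ Subgroup.upperCentralSeries G n, g = h * z) :
    Nonempty ((H ⧸ Subgroup.upperCentralSeries H n) ≃* (G ⧸ Subgroup.upperCentralSeries G n)) := by
  classical
  set N := Subgroup.upperCentralSeries G n with hN
  let φ : H →* G ⧸ N := (QuotientGroup.mk' N).comp H.subtype
  have hsurj : Function.Surjective φ := by
    intro q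
    induction q using QuotientGroup.induction_on with
    | H g =>
      obtain ⟨h, hh, z, hz, rfl⟩ := hHZ g
      refine ⟨⟨h, hh⟩, ?_⟩
      show QuotientGroup.mk h = QuotientGroup.mk (h * z)
      rw [QuotientGroup.eq]
      simpa using hz
  have hker : φ.ker = Subgroup.upperCentralSeries H n := by
    ext x
    have : φ x = 1 ↔ (x : G) ∈ N := QuotientGroup.eq_one_iff _
    rw [MonoidHom.mem_ker, this]
    constructor
    · exact fun hx => QuotUCSAux.rev_incl H n x hx
    · exact fun hx => QuotUCSAux.fwd_incl H n hHZ x hx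
  exact ⟨(QuotientGroup.quotientMulEquivOfEq hker.symm).trans
    (QuotientGroup.quotientKerEquivOfSurjective φ hsurj)⟩
end

section
/- Let G be a group and H a subgroup with G = H·Z_n(G). Then the iterated commutator subgroup [H,G,G,...,G] (with n copies of G), i.e. [_nH,G], equals γ_{n+1}(H), the (n+1)-st term of the lower central series of H. -/
open scoped commutatorElement

section Aux

variable {G : Type*} [Group G]

private lemma ucs_comm_mem {m : ℕ} {z : G} (hz : z ∈ upperCentralSeries G (m + 1)) (y : G) :
    ⁅z, y⁆ ∈ upperCentralSeries G m := by
  simpa [upperCentralSeries, commutatorElement_def, mul_assoc] using (mem_upperCentralSeries_succ_iff).mp hz y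

private lemma ucs_comm_mem' {m : ℕ} {z : G} (hz : z ∈ upperCentralSeries G (m + 1)) (y : G) :
    ⁅y, z⁆ ∈ upperCentralSeries G m := by
  rw [← commutatorElement_inv]
  exact inv_mem (ucs_comm_mem hz y)

/-- `[γ_{i+1}(G), Z_{i+j+1}(G)] ≤ Z_j(G)`. -/
private lemma lcs_ucs : ∀ i j : ℕ,
    ⁅(⊤ : Subgroup G).lowerCentralSeries i, upperCentralSeries G (i + j + 1)⁆ ≤ upperCentralSeries G j := by
  intro i
  induction i with
  | zero =>
    intro j
    rw [Subgroup.commutator_le]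
    intro g _ z hz
    rw [zero_add] at hz
    exact ucs_comm_mem' hz g
  | succ i ih =>
    intro j
    have hZn : Subgroup.Normal (upperCentralSeries G j) := Subgroup.normal_of_characteristic (Subgroup.upperCentralSeries G j)
    -- key pointwise claim
    have key : ∀ a ∈ (⊤ : Subgroup G).lowerCentralSeries i, ∀ g z : G,
        z ∈ upperCentralSeries G (i + 1 + j + 1) → ⁅⁅a, g⁆, z⁆ ∈ upperCentralSeries G j := by
      intro a ha g z hz
      have hz' : z ∈ upperCentralSeries G (i + (j + 1) + 1) := by
        have : i + 1 + j + 1 = i + (j + 1) + 1 := by omega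
        rwa [this] at hz
      have h1 : ⁅a, z⁆ ∈ upperCentralSeries G (j + 1) :=
        ih (j + 1) (Subgroup.commutator_mem_commutator ha hz')
      have hzinv : z⁻¹ ∈ upperCentralSeries G ((i + j + 1) + 1) := by
        have : i + 1 + j + 1 = (i + j + 1) + 1 := by omega
        exact inv_mem (by rwa [this] at hz)
      have hd : ⁅z⁻¹, g⁻¹⁆ ∈ upperCentralSeries G (i + j + 1) := ucs_comm_mem hzinv g⁻¹
      have h2 : ⁅a⁻¹, ⁅z⁻¹, g⁻¹⁆⁆ ∈ upperCentralSeries G j :=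
        ih j (Subgroup.commutator_mem_commutator (inv_mem ha) hd)
      have m1 : ⁅a * g * a⁻¹, ⁅a, z⁆⁻¹⁆ ∈ upperCentralSeries G j :=
        ucs_comm_mem' (inv_mem h1) _
      have m2 : ⁅a, z⁆⁻¹ * ((a * g) * (z * ⁅a⁻¹, ⁅z⁻¹, g⁻¹⁆⁆ * z⁻¹) * (a * g)⁻¹) * ⁅a, z⁆ ∈
          upperCentralSeries G j := by
        have c1 := hZn.conj_mem _ h2 z
        have c2 := hZn.conj_mem _ c1 (a * g)
        have c3 := hZn.conj_mem _ c2 ⁅a, z⁆⁻¹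
        simpa [mul_assoc] using c3
      have hid : ⁅⁅a, g⁆, z⁆ =
          ⁅a * g * a⁻¹, ⁅a, z⁆⁻¹⁆ *
            (⁅a, z⁆⁻¹ * ((a * g) * (z * ⁅a⁻¹, ⁅z⁻¹, g⁻¹⁆⁆ * z⁻¹) * (a * g)⁻¹) * ⁅a, z⁆) := by
        simp only [commutatorElement_def]
        group
      rw [hid]
      exact mul_mem m1 m2
    -- the subgroup of elements whose commutators with `Z_{i+j+2}` land in `Z_j`
    let S : Subgroup G :=
      { carrier := { x | ∀ z ∈ upperCentralSeries G (i + 1 + j + 1), ⁅x, z⁆ ∈ upperCentralSeries G j }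
        one_mem' := by intro z _; simpa using (upperCentralSeries G j).one_mem
        mul_mem' := by
          intro x y hx hy z hz
          have hxy : ⁅x * y, z⁆ = x * ⁅y, z⁆ * x⁻¹ * ⁅x, z⁆ := by
            simp only [commutatorElement_def]; group
          rw [hxy]
          exact mul_mem (hZn.conj_mem _ (hy z hz) x) (hx z hz)
        inv_mem' := by
          intro x hx z hz
          have hxi : ⁅x⁻¹, z⁆ = x⁻¹ * ⁅x, z⁆⁻¹ * x := by
            simp only [commutatorElement_def]; group
          rw [hxi]
          simpa [mul_assoc] using hZn.conj_mem _ (inv_mem (hx z hz)) x⁻¹ }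
    have hS : (⊤ : Subgroup G).lowerCentralSeries (i + 1) ≤ S := by
      show ⁅(⊤ : Subgroup G).lowerCentralSeries i, (⊤ : Subgroup G)⁆ ≤ S
      rw [Subgroup.commutator_le]
      intro a ha g _
      intro z hz
      exact key a ha g z hz
    rw [Subgroup.commutator_le]
    intro x hx z hz
    exact hS hx z hz

end Aux

/-- `[_k H, G]`: the left-normed iterated commutator subgroup `[H, G, ..., G]`
with `k` copies of `G`. -/
def iteratedCommSubgroup {G : Type*} [Group G] (H : Subgroup G) : ℕ → Subgroup G
  | 0 => H
  | k + 1 => ⁅iteratedCommSubgroup H k, (⊤ : Subgroup G)⁆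

theorem iteratedCommSubgroup_eq_lowerCentralSeries
    {G : Type*} [Group G] (H : Subgroup G) (n : ℕ)
    (hHZ : ∀ g : G, ∃ h ∈ H, ∃ z ∈ upperCentralSeries G n, g = h * z) :
    iteratedCommSubgroup H n = (Subgroup.lowerCentralSeries (⊤ : Subgroup H) n).map H.subtype := by
  set L : ℕ → Subgroup G := fun k => (Subgroup.lowerCentralSeries (⊤ : Subgroup H) k).map H.subtype with hL
  have hL0 : L 0 = H := by
    simp only [hL, Subgroup.lowerCentralSeries_zero, ← MonoidHom.range_eq_map, Subgroup.range_subtype]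
  have hLsucc : ∀ k, L (k + 1) = ⁅L k, H⁆ := by
    intro k
    show ((⁅Subgroup.lowerCentralSeries (⊤ : Subgroup H) k, ⊤⁆ : Subgroup H)).map H.subtype = _
    rw [Subgroup.map_commutator, ← MonoidHom.range_eq_map, Subgroup.range_subtype]
  -- easy direction
  have easy : ∀ k, L k ≤ iteratedCommSubgroup H k := by
    intro k
    induction k with
    | zero => exact le_of_eq hL0
    | succ k ih =>
      rw [hLsucc k]
      exact Subgroup.commutator_mono ih le_top
  -- hard direction
  have hard : ∀ k, k ≤ n →
      iteratedCommSubgroup H k ≤ L k ⊔ upperCentralSeries G (n - k) := by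
    intro k
    induction k with
    | zero =>
      intro _
      exact le_sup_of_le_left (le_of_eq hL0.symm)
    | succ k ih =>
      intro hkn
      have hk : k ≤ n := le_of_lt hkn
      have hsub : n - k = (n - (k + 1)) + 1 := by omega
      have hZnorm : Subgroup.Normal (upperCentralSeries G (n - (k + 1))) :=
        Subgroup.normal_of_characteristic (Subgroup.upperCentralSeries G _)
      show ⁅iteratedCommSubgroup H k, (⊤ : Subgroup G)⁆ ≤ _
      rw [Subgroup.commutator_le]
      intro x hx g _
      have hx' : x ∈ (↑(L k ⊔ upperCentralSeries G (n - k)) : Set G) := ih hk hx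
      haveI : (upperCentralSeries G (n - k)).Normal :=
        Subgroup.normal_of_characteristic (Subgroup.upperCentralSeries G _)
      rw [Subgroup.mul_normal] at hx'
      obtain ⟨c, hc, w, hw, rfl⟩ := hx'
      obtain ⟨h, hh, z, hz, rfl⟩ := hHZ g
      have hw' : w ∈ upperCentralSeries G ((n - (k + 1)) + 1) := by rwa [hsub] at hw
      -- memberships of the four pieces
      have p1 : ⁅w, h * z⁆ ∈ upperCentralSeries G (n - (k + 1)) := ucs_comm_mem hw' _
      have p1' : c * ⁅w, h * z⁆ * c⁻¹ ∈ upperCentralSeries G (n - (k + 1)) :=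
        hZnorm.conj_mem _ p1 c
      have p2 : ⁅c, h⁆ ∈ L (k + 1) := by
        rw [hLsucc k]
        exact Subgroup.commutator_mem_commutator hc hh
      have hcG : c ∈ (⊤ : Subgroup G).lowerCentralSeries k := Subgroup.lowerCentralSeries_map_subtype_le H k hc
      have hz' : z ∈ upperCentralSeries G (k + (n - (k + 1)) + 1) := by
        have : k + (n - (k + 1)) + 1 = n := by omega
        rwa [this]
      have p3 : ⁅c, z⁆ ∈ upperCentralSeries G (n - (k + 1)) :=
        lcs_ucs k (n - (k + 1)) (Subgroup.commutator_mem_commutator hcG hz')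
      have p3' : h * ⁅c, z⁆ * h⁻¹ ∈ upperCentralSeries G (n - (k + 1)) :=
        hZnorm.conj_mem _ p3 h
      have hid : ⁅c * w, h * z⁆ =
          (c * ⁅w, h * z⁆ * c⁻¹) * (⁅c, h⁆ * (h * ⁅c, z⁆ * h⁻¹)) := by
        simp only [commutatorElement_def]
        group
      rw [hid]
      exact mul_mem (Subgroup.mem_sup_right p1')
        (mul_mem (Subgroup.mem_sup_left p2) (Subgroup.mem_sup_right p3'))
  have h1 : iteratedCommSubgroup H n ≤ L n := by
    have := hard n le_rfl
    simpa [upperCentralSeries, Subgroup.upperCentralSeries_zero] using this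
  exact le_antisymm h1 (easy n)
end

section
/- Let G be a finite group such that G/Z(G) is a p-group of order p^k with k ≥ 2. Then the commutativity degree satisfies d(G) ≤ (p^k + p - 1)/p^{k+1}. -/
theorem commutativity_degree_le_of_central_quotient_p_group
    {G : Type*} [Group G] [Finite G] (p k : ℕ) (hp : p.Prime) (hk : 2 ≤ k)
    (hcard : Nat.card (G ⧸ Subgroup.center G) = p ^ k) :
    (Nat.card {q : G × G // Commute q.1 q.2} : ℚ) / (Nat.card G) ^ 2 ≤
      ((p : ℚ) ^ k + p - 1) / (p : ℚ) ^ (k + 1) := by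
  classical
  have : Fintype G := Fintype.ofFinite G
  set Z := Subgroup.center G
  set n := Nat.card G with hn
  set z := Nat.card Z with hz
  -- index of the center is p ^ k
  have hindex : Z.index = p ^ k := by
    rw [Subgroup.index, hcard]
  have hnz : n = p ^ k * z := by
    rw [hn, ← Z.index_mul_card, hindex]
  -- the commuting pairs decompose as a sigma of centralizers
  have hdecomp : Nat.card {q : G × G // Commute q.1 q.2} =
      ∑ x : G, Nat.card (Subgroup.centralizer {x} : Subgroup G) := by
    rw [Nat.card_eq_fintype_card]
    rw [Fintype.card_congr (Equiv.subtypeProdEquivSigmaSubtype fun a b : G => Commute a b)]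
    rw [Fintype.card_sigma]
    refine Finset.sum_congr rfl fun x _ => ?_
    rw [Nat.card_eq_fintype_card]
    refine Fintype.card_congr (Equiv.subtypeEquivRight fun y => ?_)
    rw [Subgroup.mem_centralizer_singleton_iff]
    exact ⟨fun h => h.symm, fun h => h.symm⟩
  -- bound on noncentral centralizers
  have key : ∀ x : G, x ∉ Z → p * Nat.card (Subgroup.centralizer {x} : Subgroup G) ≤ n := by
    intro x hx
    set H := Subgroup.centralizer ({x} : Set G)
    have hle : Z ≤ H := Subgroup.center_le_centralizer {x}
    have hdvd : H.index ∣ p ^ k := hindex ▸ Subgroup.index_dvd_of_le hle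
    have hne : H.index ≠ 1 := by
      rw [Ne, Subgroup.index_eq_one]
      intro htop
      apply hx
      rw [Subgroup.mem_center_iff]
      intro g
      have : g ∈ H := htop ▸ Subgroup.mem_top g
      rw [Subgroup.mem_centralizer_singleton_iff] at this
      exact this
    have hpdvd : p ∣ H.index := by
      obtain ⟨j, hj, hje⟩ := (Nat.dvd_prime_pow hp).mp hdvd
      cases j with
      | zero => exact absurd hje hne
      | succ j => exact hje ▸ dvd_pow_self p (Nat.succ_ne_zero j)
    calc p * Nat.card H ≤ H.index * Nat.card H :=
          Nat.mul_le_mul_right _ (Nat.le_of_dvd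
            (Nat.pos_of_ne_zero H.index_ne_zero_of_finite) hpdvd)
      _ = n := H.index_mul_card
  -- central centralizers are at most the whole group
  have key2 : ∀ x : G, Nat.card (Subgroup.centralizer {x} : Subgroup G) ≤ n :=
    fun x => Nat.card_le_card_of_injective _ Subtype.val_injective
  -- main counting bound
  have hsum : p * Nat.card {q : G × G // Commute q.1 q.2} ≤ z * (p * n) + (n - z) * n := by
    rw [hdecomp, Finset.mul_sum]
    calc ∑ x : G, p * Nat.card (Subgroup.centralizer {x} : Subgroup G)
        ≤ ∑ x : G, (if x ∈ Z then p * n else n) := by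
          refine Finset.sum_le_sum fun x _ => ?_
          by_cases hx : x ∈ Z
          · simp only [hx, if_true]
            exact Nat.mul_le_mul_left p (key2 x)
          · simp only [hx, if_false]
            exact key x hx
      _ = z * (p * n) + (n - z) * n := by
          rw [Finset.sum_ite, Finset.sum_const, Finset.sum_const, smul_eq_mul, smul_eq_mul]
          congr 2
          · rw [hz, Nat.card_eq_fintype_card, Fintype.card_subtype]
          · rw [hn, Nat.card_eq_fintype_card]
            rw [Finset.filter_not, Finset.card_sdiff_of_subset (Finset.filter_subset _ _)]
            congr 1
            rw [hz, Nat.card_eq_fintype_card, Fintype.card_subtype]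
  -- pass to rationals
  have hppos : (0:ℚ) < p := by exact_mod_cast hp.pos
  have hzpos : 0 < z := Nat.card_pos
  have hnpos : 0 < n := Nat.card_pos
  have hzn : z ≤ n := Nat.le_of_dvd hnpos Z.card_subgroup_dvd_card
  have hQ : (p:ℚ) * Nat.card {q : G × G // Commute q.1 q.2} ≤
      (z:ℚ) * (p * n) + ((n:ℚ) - z) * n := by
    have := hsum
    push_cast [Nat.cast_sub hzn] at *
    exact_mod_cast hsum
  rw [div_le_div_iff₀ (by positivity) (by positivity)]
  have hnQ : (n:ℚ) = (p:ℚ) ^ k * z := by exact_mod_cast hnz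
  have expand : ((p:ℚ) ^ k + p - 1) * (n:ℚ) ^ 2 =
      (p:ℚ) ^ k * ((z:ℚ) * (p * n) + ((n:ℚ) - z) * n) := by
    rw [hnQ]; ring
  calc (Nat.card {q : G × G // Commute q.1 q.2} : ℚ) * (p:ℚ) ^ (k + 1)
      = (p:ℚ) ^ k * ((p:ℚ) * Nat.card {q : G × G // Commute q.1 q.2}) := by ring
    _ ≤ (p:ℚ) ^ k * ((z:ℚ) * (p * n) + ((n:ℚ) - z) * n) := by
        apply mul_le_mul_of_nonneg_left hQ (by positivity)
    _ = ((p:ℚ) ^ k + p - 1) * (n:ℚ) ^ 2 := expand.symm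
end

section
/- Let G₁, G₂ be finite groups with normal subgroups N₁ ≤ Z(G₁), N₂ ≤ Z(G₂), and suppose there are isomorphisms α : G₁/N₁ → G₂/N₂ and β : G₁' → G₂' such that for all x, y ∈ G₁, β([x,y]) = [x₂,y₂] whenever x₂N₂ = α(xN₁) and y₂N₂ = α(yN₁). Then d(G₁) = d(G₂). -/
open scoped commutatorElement

section Aux

variable {G : Type*} [Group G]

private lemma commute_of_coset {N : Subgroup G} [N.Normal] (hN : N ≤ Subgroup.center G)
    {x x' y y' : G} (hx : (x : G ⧸ N) = (x' : G ⧸ N)) (hy : (y : G ⧸ N) = (y' : G ⧸ N))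
    (h : Commute x y) : Commute x' y' := by
  have hn : x⁻¹ * x' ∈ N := QuotientGroup.eq.mp hx
  have hm : y⁻¹ * y' ∈ N := QuotientGroup.eq.mp hy
  have cn : ∀ g : G, Commute g (x⁻¹ * x') := fun g => Subgroup.mem_center_iff.mp (hN hn) g
  have cm : ∀ g : G, Commute g (y⁻¹ * y') := fun g => Subgroup.mem_center_iff.mp (hN hm) g
  have ex : x' = x * (x⁻¹ * x') := by group
  have ey : y' = y * (y⁻¹ * y') := by group
  rw [ex, ey]
  exact Commute.mul_left (h.mul_right (cm x)) ((cn (y * (y⁻¹ * y'))).symm)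

private lemma aux_card (N : Subgroup G) [N.Normal] (hN : N ≤ Subgroup.center G) :
    Nat.card {q : G × G // Commute q.1 q.2} =
      Nat.card {p : (G ⧸ N) × (G ⧸ N) //
        ∀ x y : G, (x : G ⧸ N) = p.1 → (y : G ⧸ N) = p.2 → Commute x y} *
      Nat.card N ^ 2 := by
  have key : {q : G × G // Commute q.1 q.2} ≃
      {p : (G ⧸ N) × (G ⧸ N) //
        ∀ x y : G, (x : G ⧸ N) = p.1 → (y : G ⧸ N) = p.2 → Commute x y} × (N × N) := by
    refine
      { toFun := fun q =>
          (⟨((q.1.1 : G ⧸ N), (q.1.2 : G ⧸ N)), fun x y hx hy =>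
              commute_of_coset hN hx.symm hy.symm q.2⟩,
            (⟨((q.1.1 : G ⧸ N)).out⁻¹ * q.1.1,
              QuotientGroup.eq.mp (QuotientGroup.out_eq' _)⟩,
             ⟨((q.1.2 : G ⧸ N)).out⁻¹ * q.1.2,
              QuotientGroup.eq.mp (QuotientGroup.out_eq' _)⟩)),
        invFun := fun p =>
          ⟨(p.1.1.1.out * (p.2.1 : G), p.1.1.2.out * (p.2.2 : G)),
            p.1.2 _ _ ?_ ?_⟩,
        left_inv := ?_, right_inv := ?_ }
    · rw [QuotientGroup.mk_mul, (QuotientGroup.eq_one_iff _).mpr p.2.1.2, mul_one,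
        QuotientGroup.out_eq']
    · rw [QuotientGroup.mk_mul, (QuotientGroup.eq_one_iff _).mpr p.2.2.2, mul_one,
        QuotientGroup.out_eq']
    · rintro ⟨⟨a, b⟩, h⟩
      simp only [Subtype.mk.injEq, Prod.mk.injEq]
      constructor <;> rw [mul_inv_cancel_left]
    · rintro ⟨⟨⟨u, v⟩, h⟩, ⟨n, hn⟩, ⟨m, hm⟩⟩
      have hu : ((u.out * n : G) : G ⧸ N) = u := by
        rw [QuotientGroup.mk_mul, (QuotientGroup.eq_one_iff _).mpr hn, mul_one,
          QuotientGroup.out_eq']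
      have hv : ((v.out * m : G) : G ⧸ N) = v := by
        rw [QuotientGroup.mk_mul, (QuotientGroup.eq_one_iff _).mpr hm, mul_one,
          QuotientGroup.out_eq']
      refine Prod.ext (Subtype.ext (Prod.ext hu hv)) (Prod.ext ?_ ?_)
      · exact Subtype.ext (by show (_ : G ⧸ N).out⁻¹ * _ = n; rw [hu, inv_mul_cancel_left])
      · exact Subtype.ext (by show (_ : G ⧸ N).out⁻¹ * _ = m; rw [hv, inv_mul_cancel_left])
  rw [Nat.card_congr key, Nat.card_prod, Nat.card_prod, sq]

end Aux

theorem commutativity_degree_eq_of_isoclinic_central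
    {G₁ G₂ : Type*} [Group G₁] [Group G₂] [Finite G₁] [Finite G₂]
    (N₁ : Subgroup G₁) (N₂ : Subgroup G₂) [N₁.Normal] [N₂.Normal]
    (hN₁ : N₁ ≤ Subgroup.center G₁) (hN₂ : N₂ ≤ Subgroup.center G₂)
    (α : (G₁ ⧸ N₁) ≃* (G₂ ⧸ N₂))
    (β : commutator G₁ ≃* commutator G₂)
    (hβ : ∀ (x y : G₁) (x₂ y₂ : G₂),
      (x₂ : G₂ ⧸ N₂) = α (x : G₁ ⧸ N₁) → (y₂ : G₂ ⧸ N₂) = α (y : G₁ ⧸ N₁) →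
      ∀ hm : ⁅x, y⁆ ∈ commutator G₁, (β ⟨⁅x, y⁆, hm⟩ : G₂) = ⁅x₂, y₂⁆) :
    (Nat.card {q : G₁ × G₁ // Commute q.1 q.2} : ℚ) / (Nat.card G₁) ^ 2 =
      (Nat.card {q : G₂ × G₂ // Commute q.1 q.2} : ℚ) / (Nat.card G₂) ^ 2 := by
  have h1 := aux_card N₁ hN₁
  have h2 := aux_card N₂ hN₂
  -- the two "commuting coset pair" sets are in bijection via α
  have hiff : ∀ p : (G₁ ⧸ N₁) × (G₁ ⧸ N₁),
      (∀ x y : G₁, (x : G₁ ⧸ N₁) = p.1 → (y : G₁ ⧸ N₁) = p.2 → Commute x y) ↔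
      (∀ x y : G₂, (x : G₂ ⧸ N₂) = α p.1 → (y : G₂ ⧸ N₂) = α p.2 → Commute x y) := by
    rintro ⟨u, v⟩
    obtain ⟨x, hx⟩ := QuotientGroup.mk_surjective u
    obtain ⟨y, hy⟩ := QuotientGroup.mk_surjective v
    obtain ⟨x₂, hx₂⟩ := QuotientGroup.mk_surjective (α u)
    obtain ⟨y₂, hy₂⟩ := QuotientGroup.mk_surjective (α v)
    have hmem : ⁅x, y⁆ ∈ commutator G₁ :=
      Subgroup.commutator_mem_commutator (Subgroup.mem_top x) (Subgroup.mem_top y)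
    have hβ' := hβ x y x₂ y₂ (by rw [hx₂, hx]) (by rw [hy₂, hy]) hmem
    constructor
    · intro h a b ha hb
      have hc : Commute x y := h x y hx hy
      have h1' : (⟨⁅x, y⁆, hmem⟩ : commutator G₁) = 1 :=
        Subtype.ext (commutatorElement_eq_one_iff_commute.mpr hc)
      have : ⁅x₂, y₂⁆ = 1 := by rw [← hβ', h1', map_one, OneMemClass.coe_one]
      have hc₂ : Commute x₂ y₂ := commutatorElement_eq_one_iff_commute.mp this
      exact commute_of_coset hN₂ (hx₂.trans ha.symm) (hy₂.trans hb.symm) hc₂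
    · intro h a b ha hb
      have hc₂ : Commute x₂ y₂ := h x₂ y₂ hx₂ hy₂
      have h1' : (β ⟨⁅x, y⁆, hmem⟩ : G₂) = 1 := by
        rw [hβ']; exact commutatorElement_eq_one_iff_commute.mpr hc₂
      have h2' : (⟨⁅x, y⁆, hmem⟩ : commutator G₁) = 1 := by
        apply β.injective
        rw [map_one]
        exact Subtype.ext h1'
      have hc : Commute x y :=
        commutatorElement_eq_one_iff_commute.mp (Subtype.ext_iff.mp h2')
      exact commute_of_coset hN₁ (hx.trans ha.symm) (hy.trans hb.symm) hc
  have hS : Nat.card {p : (G₁ ⧸ N₁) × (G₁ ⧸ N₁) //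
        ∀ x y : G₁, (x : G₁ ⧸ N₁) = p.1 → (y : G₁ ⧸ N₁) = p.2 → Commute x y} =
      Nat.card {p : (G₂ ⧸ N₂) × (G₂ ⧸ N₂) //
        ∀ x y : G₂, (x : G₂ ⧸ N₂) = p.1 → (y : G₂ ⧸ N₂) = p.2 → Commute x y} := by
    refine Nat.card_congr (Equiv.subtypeEquiv (α.toEquiv.prodCongr α.toEquiv) ?_)
    intro p
    simpa using hiff p
  have hQ : Nat.card (G₁ ⧸ N₁) = Nat.card (G₂ ⧸ N₂) := Nat.card_congr α.toEquiv
  have hG₁ : Nat.card G₁ = Nat.card (G₁ ⧸ N₁) * Nat.card N₁ :=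
    Subgroup.card_eq_card_quotient_mul_card_subgroup N₁
  have hG₂ : Nat.card G₂ = Nat.card (G₂ ⧸ N₂) * Nat.card N₂ :=
    Subgroup.card_eq_card_quotient_mul_card_subgroup N₂
  have hn₁ : (0 : ℚ) < Nat.card N₁ := by exact_mod_cast Nat.card_pos
  have hn₂ : (0 : ℚ) < Nat.card N₂ := by exact_mod_cast Nat.card_pos
  have hq₁ : (0 : ℚ) < Nat.card (G₁ ⧸ N₁) := by exact_mod_cast Nat.card_pos
  have hq₂ : (0 : ℚ) < Nat.card (G₂ ⧸ N₂) := by exact_mod_cast Nat.card_pos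
  rw [h1, h2, hG₁, hG₂, hS, hQ]
  push_cast
  field_simp
end

section
/- Let G₁, G₂ be finite groups that are isoclinic: there exist isomorphisms α : G₁/Z(G₁) → G₂/Z(G₂) and β : G₁' → G₂' such that β([x,y]) = [x₂,y₂] for all x,y ∈ G₁, x₂ ∈ α(xZ(G₁)), y₂ ∈ α(yZ(G₁)). Then for each x ∈ G₁ and x₂ ∈ α(xZ(G₁)), |C_{G₁}(x)|/|G₁| = |C_{G₂}(x₂)|/|G₂|. -/
open scoped commutatorElement

lemma card_eq_card_orbit_mul_card_centralizer
    {G : Type*} [Group G] [Finite G] (x : G) :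
    Nat.card G =
      Nat.card (MulAction.orbit (ConjAct G) x) * Nat.card (Subgroup.centralizer ({x} : Set G)) := by
  have h1 : Nat.card (MulAction.orbit (ConjAct G) x × MulAction.stabilizer (ConjAct G) x)
      = Nat.card (ConjAct G) :=
    Nat.card_congr (MulAction.orbitProdStabilizerEquivGroup (ConjAct G) x)
  have h2 : Nat.card (Subgroup.centralizer ({x} : Set G))
      = Nat.card (MulAction.stabilizer (ConjAct G) x) := by
    refine Nat.card_congr (Equiv.subtypeEquiv ConjAct.toConjAct.toEquiv fun g => ?_)
    rw [Subgroup.centralizer_eq_comap_stabilizer]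
    exact Iff.rfl
  have h3 : Nat.card (ConjAct G) = Nat.card G :=
    Nat.card_congr ConjAct.ofConjAct.toEquiv
  rw [h2, ← h3, ← h1, Nat.card_prod]

theorem centralizer_ratio_eq_of_isoclinic
    {G₁ G₂ : Type*} [Group G₁] [Group G₂] [Finite G₁] [Finite G₂]
    (α : (G₁ ⧸ Subgroup.center G₁) ≃* (G₂ ⧸ Subgroup.center G₂))
    (β : commutator G₁ ≃* commutator G₂)
    (hβ : ∀ (x y : G₁) (x₂ y₂ : G₂),
      (x₂ : G₂ ⧸ Subgroup.center G₂) = α (x : G₁ ⧸ Subgroup.center G₁) →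
      (y₂ : G₂ ⧸ Subgroup.center G₂) = α (y : G₁ ⧸ Subgroup.center G₁) →
      ∀ hm : ⁅x, y⁆ ∈ commutator G₁, (β ⟨⁅x, y⁆, hm⟩ : G₂) = ⁅x₂, y₂⁆)
    (x : G₁) (x₂ : G₂)
    (hx : (x₂ : G₂ ⧸ Subgroup.center G₂) = α (x : G₁ ⧸ Subgroup.center G₁)) :
    (Nat.card (Subgroup.centralizer {x}) : ℚ) / Nat.card G₁ =
      (Nat.card (Subgroup.centralizer {x₂}) : ℚ) / Nat.card G₂ := by
  -- membership of y * x⁻¹ in the commutator subgroup, for y in the orbit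
  have hmem : ∀ y : G₁, y ∈ MulAction.orbit (ConjAct G₁) x → y * x⁻¹ ∈ commutator G₁ := by
    rintro y ⟨g, rfl⟩
    have : (g • x) * x⁻¹ = ⁅ConjAct.ofConjAct g, x⁆ := by
      rw [ConjAct.smul_def, commutatorElement_def]
    rw [this, commutator_def]
    exact Subgroup.commutator_mem_commutator (Subgroup.mem_top _) (Subgroup.mem_top _)
  set S₁ := MulAction.orbit (ConjAct G₁) x with hS₁
  set S₂ := MulAction.orbit (ConjAct G₂) x₂ with hS₂
  -- the bijection between the conjugacy classes
  let F : S₁ → G₂ := fun y => (β ⟨y.1 * x⁻¹, hmem y.1 y.2⟩ : G₂) * x₂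
  have hβval : ∀ (g : G₁) (g₂ : G₂),
      (g₂ : G₂ ⧸ Subgroup.center G₂) = α (g : G₁ ⧸ Subgroup.center G₁) →
      ∀ hm : g * x * g⁻¹ * x⁻¹ ∈ commutator G₁,
      (β ⟨g * x * g⁻¹ * x⁻¹, hm⟩ : G₂) = g₂ * x₂ * g₂⁻¹ * x₂⁻¹ := by
    intro g g₂ hg hm
    have : (⟨g * x * g⁻¹ * x⁻¹, hm⟩ : commutator G₁) = ⟨⁅g, x⁆, by
        rw [commutator_def]
        exact Subgroup.commutator_mem_commutator (Subgroup.mem_top _) (Subgroup.mem_top _)⟩ := rfl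
    rw [this, hβ g x g₂ x₂ hg hx, commutatorElement_def]
  have hFmem : ∀ y : S₁, F y ∈ S₂ := by
    rintro ⟨y, hy⟩
    obtain ⟨g, rfl⟩ := hy
    set g' := ConjAct.ofConjAct g with hg'
    obtain ⟨g₂, hg₂⟩ := QuotientGroup.mk_surjective (α (g' : G₁ ⧸ Subgroup.center G₁))
    have hval : (g • x) * x⁻¹ = g' * x * g'⁻¹ * x⁻¹ := by rw [ConjAct.smul_def]
    have : F ⟨g • x, ⟨g, rfl⟩⟩ = g₂ * x₂ * g₂⁻¹ := by
      show (β ⟨(g • x) * x⁻¹, _⟩ : G₂) * x₂ = _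
      have h2 : (⟨(g • x) * x⁻¹, hmem _ ⟨g, rfl⟩⟩ : commutator G₁)
          = ⟨g' * x * g'⁻¹ * x⁻¹, by rw [← hval]; exact hmem _ ⟨g, rfl⟩⟩ :=
        Subtype.ext hval
      rw [h2, hβval g' g₂ hg₂ _]
      group
    rw [this]
    exact ⟨ConjAct.toConjAct g₂, by simp [ConjAct.smul_def]⟩
  have hinj : Function.Injective F := by
    rintro y y' h
    have h2 : (β ⟨y.1 * x⁻¹, hmem y.1 y.2⟩ : G₂) = (β ⟨y'.1 * x⁻¹, hmem y'.1 y'.2⟩ : G₂) :=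
      mul_right_cancel h
    have h3 := β.injective (Subtype.ext h2)
    have h4 : y.1 * x⁻¹ = y'.1 * x⁻¹ := congrArg Subtype.val h3
    exact Subtype.ext (mul_right_cancel h4)
  have hsurj : ∀ z ∈ S₂, ∃ y : S₁, F y = z := by
    rintro z ⟨g₂c, rfl⟩
    set g₂ := ConjAct.ofConjAct g₂c with hg₂def
    obtain ⟨g, hg⟩ := QuotientGroup.mk_surjective (α.symm (g₂ : G₂ ⧸ Subgroup.center G₂))
    have hg' : (g₂ : G₂ ⧸ Subgroup.center G₂) = α (g : G₁ ⧸ Subgroup.center G₁) := by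
      rw [hg, MulEquiv.apply_symm_apply]
    have hy : g * x * g⁻¹ ∈ S₁ :=
      ⟨ConjAct.toConjAct g, by simp [ConjAct.smul_def]⟩
    refine ⟨⟨g * x * g⁻¹, hy⟩, ?_⟩
    show (β ⟨g * x * g⁻¹ * x⁻¹, _⟩ : G₂) * x₂ = g₂c • x₂
    rw [hβval g g₂ hg' _, ConjAct.smul_def, ← hg₂def]
    group
  -- equal cardinalities of conjugacy classes
  have hcardS : Nat.card S₁ = Nat.card S₂ := by
    refine Nat.card_congr (Equiv.ofBijective (fun y => ⟨F y, hFmem y⟩) ⟨?_, ?_⟩)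
    · intro a b hab
      exact hinj (congrArg Subtype.val hab)
    · rintro ⟨z, hz⟩
      obtain ⟨y, hy⟩ := hsurj z hz
      exact ⟨y, Subtype.ext hy⟩
  have h1 := card_eq_card_orbit_mul_card_centralizer x
  have h2 := card_eq_card_orbit_mul_card_centralizer x₂
  haveI : Nonempty ↑S₁ := ⟨⟨x, MulAction.mem_orbit_self x⟩⟩
  haveI : Nonempty ↑S₂ := ⟨⟨x₂, MulAction.mem_orbit_self x₂⟩⟩
  have hn : Nat.card ↑S₁ ≠ 0 := Nat.card_pos.ne'
  have hc₁ : Nat.card (Subgroup.centralizer ({x} : Set G₁)) ≠ 0 := Nat.card_pos.ne'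
  have hc₂ : Nat.card (Subgroup.centralizer ({x₂} : Set G₂)) ≠ 0 := Nat.card_pos.ne'
  rw [h1, h2, ← hcardS]
  push_cast
  rw [div_eq_div_iff (by positivity) (by positivity)]
  ring
end
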